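/- Suppose w : [C+1,∞) → ℝ is differentiable and satisfies w'(t) ≤ -2(t+C)^{-1} w(t) + C(t-C)^{-3} for some constant C > 0. Then there exists a constant C' such that w(t) ≤ C'(t-C)^{-2} log t for all sufficiently large t. -/

import Mathlib

/-- If `w` is differentiable on `[C+1, ∞)` with
`w'(t) ≤ -2 (t+C)⁻¹ w(t) + C (t-C)^{-3}` for some `C > 0`, then there exists a constant
`C'` with `w(t) ≤ C' (t-C)^{-2} log t` for all sufficiently large `t`. -/
theorem stmt5 (C : ℝ) (hC : 0 < C) (w : ℝ → ℝ)
    (hdiff : ∀ t ≥ C + 1, DifferentiableAt ℝ w t)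
    (hineq : ∀ t ≥ C + 1,
      deriv w t ≤ -2 * (t + C)⁻¹ * w t + C * (t - C) ^ (-3 : ℤ)) :
    ∃ C' T : ℝ, ∀ t ≥ T, w t ≤ C' * (t - C) ^ (-2 : ℤ) * Real.log t := by
  set K : ℝ := C * (2 * C + 1) ^ 2 with hKdef
  have hKpos : 0 ≤ K := by positivity
  set F : ℝ → ℝ := fun t => K * Real.log (t - C) - (t + C) ^ 2 * w t with hFdef
  have hFderiv : ∀ t ≥ C + 1, HasDerivAt F
      (K * (t - C)⁻¹ - (2 * (t + C) * w t + (t + C) ^ 2 * deriv w t)) t := by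
    intro t ht
    have htC : (0 : ℝ) < t - C := by linarith
    have h1 : HasDerivAt (fun t : ℝ => t - C) 1 t := by
      simpa using (hasDerivAt_id t).sub_const C
    have hlog : HasDerivAt (fun t : ℝ => K * Real.log (t - C)) (K * (t - C)⁻¹) t := by
      have := (Real.hasDerivAt_log htC.ne').comp t h1
      simpa using this.const_mul K
    have h2 : HasDerivAt (fun t : ℝ => (t + C) ^ 2) (2 * (t + C)) t := by
      have h := ((hasDerivAt_id t).add_const C).fun_pow 2
      simpa using h
    have hw := (hdiff t ht).hasDerivAt
    exact hlog.sub (h2.mul hw)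
  have hderiv_nonneg : ∀ t ≥ C + 1,
      0 ≤ K * (t - C)⁻¹ - (2 * (t + C) * w t + (t + C) ^ 2 * deriv w t) := by
    intro t ht
    have hu : (1 : ℝ) ≤ t - C := by linarith
    have hu0 : (0 : ℝ) < t - C := by linarith
    have hv0 : (0 : ℝ) < t + C := by linarith
    have hz : (t - C) ^ (-3 : ℤ) = ((t - C) ^ 3)⁻¹ := by
      rw [show ((-3:ℤ)) = -(3:ℕ) from rfl, zpow_neg, zpow_natCast]
    have hi := hineq t ht
    rw [hz] at hi
    have hmul : (t + C) ^ 2 * deriv w t ≤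
        (t + C) ^ 2 * (-2 * (t + C)⁻¹ * w t + C * ((t - C) ^ 3)⁻¹) :=
      mul_le_mul_of_nonneg_left hi (by positivity)
    have e1 : (t + C) ^ 2 * (-2 * (t + C)⁻¹ * w t + C * ((t - C) ^ 3)⁻¹)
        = -2 * (t + C) * w t + C * (t + C) ^ 2 * ((t - C) ^ 3)⁻¹ := by
      field_simp
    rw [e1] at hmul
    have h3 : C * (t + C) ^ 2 ≤ K * (t - C) ^ 2 := by
      have hle : t + C ≤ (2 * C + 1) * (t - C) := by nlinarith
      simp only [hKdef]
      nlinarith [mul_le_mul hle hle hv0.le (by positivity : (0:ℝ) ≤ (2*C+1)*(t-C)), hC.le,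
        mul_nonneg hC.le (sq_nonneg (t - C))]
    have e2 : C * (t + C) ^ 2 * ((t - C) ^ 3)⁻¹ ≤ K * (t - C)⁻¹ := by
      have := mul_le_mul_of_nonneg_right h3 (by positivity : (0:ℝ) ≤ ((t - C) ^ 3)⁻¹)
      calc C * (t + C) ^ 2 * ((t - C) ^ 3)⁻¹
          ≤ K * (t - C) ^ 2 * ((t - C) ^ 3)⁻¹ := this
        _ = K * (t - C)⁻¹ := by field_simp
    linarith
  have hmono : MonotoneOn F (Set.Ici (C + 1)) := by
    apply monotoneOn_of_deriv_nonneg (convex_Ici _)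
    · exact fun t ht => (hFderiv t ht).continuousAt.continuousWithinAt
    · intro t ht
      rw [interior_Ici] at ht
      exact (hFderiv t ht.le).differentiableAt.differentiableWithinAt
    · intro t ht
      rw [interior_Ici] at ht
      rw [(hFderiv t ht.le).deriv]
      exact hderiv_nonneg t ht.le
  set A : ℝ := (2 * C + 1) ^ 2 * w (C + 1) with hAdef
  refine ⟨K + |A|, max (C + 1) 3, fun t ht => ?_⟩
  have htC1 : C + 1 ≤ t := le_trans (le_max_left _ _) ht
  have ht3 : (3 : ℝ) ≤ t := le_trans (le_max_right _ _) ht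
  have hu0 : (0 : ℝ) < t - C := by linarith
  have hv0 : (0 : ℝ) < t + C := by linarith
  have hFle : F (C + 1) ≤ F t := hmono (Set.self_mem_Ici) htC1 htC1
  have hF1 : F (C + 1) = -A := by
    simp only [hFdef, hAdef]
    have : C + 1 - C = 1 := by ring
    rw [this, Real.log_one]
    ring_nf
  rw [hF1] at hFle
  -- (t+C)^2 * w t ≤ K * log (t - C) + A
  have hkey : (t + C) ^ 2 * w t ≤ K * Real.log (t - C) + A := by
    simp only [hFdef] at hFle; linarith
  have hlog1 : (1 : ℝ) ≤ Real.log t := by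
    rw [show (1:ℝ) = Real.log (Real.exp 1) from (Real.log_exp 1).symm]
    apply Real.log_le_log (Real.exp_pos 1)
    nlinarith [Real.exp_one_lt_d9]
  have hlogle : Real.log (t - C) ≤ Real.log t :=
    Real.log_le_log hu0 (by linarith)
  have hX : K * Real.log (t - C) + A ≤ (K + |A|) * Real.log t := by
    have h1 : K * Real.log (t - C) ≤ K * Real.log t :=
      mul_le_mul_of_nonneg_left hlogle hKpos
    have h2 : A ≤ |A| * Real.log t := by
      calc A ≤ |A| := le_abs_self A
        _ = |A| * 1 := (mul_one _).symm
        _ ≤ |A| * Real.log t := mul_le_mul_of_nonneg_left hlog1 (abs_nonneg A)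
    nlinarith
  have hY : (0 : ℝ) ≤ (K + |A|) * Real.log t := by
    have := abs_nonneg A
    nlinarith
  have hwle : w t ≤ ((t + C) ^ 2)⁻¹ * ((K + |A|) * Real.log t) := by
    have hsq : (0 : ℝ) < (t + C) ^ 2 := by positivity
    have : w t ≤ ((t + C) ^ 2)⁻¹ * ((t + C) ^ 2 * w t) := by
      rw [← mul_assoc, inv_mul_cancel₀ hsq.ne', one_mul]
    calc w t ≤ ((t + C) ^ 2)⁻¹ * ((t + C) ^ 2 * w t) := this
      _ ≤ ((t + C) ^ 2)⁻¹ * ((K + |A|) * Real.log t) := by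
          apply mul_le_mul_of_nonneg_left _ (by positivity)
          exact le_trans hkey hX
  have hinv : ((t + C) ^ 2)⁻¹ ≤ ((t - C) ^ 2)⁻¹ := by
    apply inv_anti₀ (by positivity)
    nlinarith
  have hz2 : (t - C) ^ (-2 : ℤ) = ((t - C) ^ 2)⁻¹ := by
    rw [show ((-2:ℤ)) = -(2:ℕ) from rfl, zpow_neg, zpow_natCast]
  rw [hz2]
  calc w t ≤ ((t + C) ^ 2)⁻¹ * ((K + |A|) * Real.log t) := hwle
    _ ≤ ((t - C) ^ 2)⁻¹ * ((K + |A|) * Real.log t) :=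
        mul_le_mul_of_nonneg_right hinv hY
    _ = (K + |A|) * ((t - C) ^ 2)⁻¹ * Real.log t := by ring
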